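/- Let L : V → V be a bounded Δ-preserving operator on a Δ-invariant subspace V of L²(ℛ), where Δ is a uniform lattice in a second countable LCA group ℛ, and assume the only finite-dimensional Δ-invariant subspace of L²(ℛ) is {0} and that eigenspaces of any Δ-preserving operator are Δ-invariant. If L is compact, then L = 0. -/

import Mathlib

section Aux


open scoped InnerProductSpace

variable {V : Type*} [NormedAddCommGroup V] [InnerProductSpace ℂ V]

/-- polarization-type bound: if `|re⟪Ax,x⟫| ≤ C‖x‖²` for all `x` and `A` is symmetric,
then `‖A‖ ≤ C`. -/
lemma my_sa_norm_le (A : V →L[ℂ] V) (hsym : ∀ x y : V, ⟪A x, y⟫_ℂ = ⟪x, A y⟫_ℂ)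
    {C : ℝ} (hC : 0 ≤ C) (h : ∀ x : V, |(⟪A x, x⟫_ℂ).re| ≤ C * ‖x‖ ^ 2) :
    ‖A‖ ≤ C := by
  apply A.opNorm_le_bound hC
  intro x
  rcases eq_or_ne (A x) 0 with h0 | h0
  · simp [h0, mul_nonneg hC (norm_nonneg x)]
  rcases eq_or_ne x 0 with rfl | hx
  · simp
  set y : V := ((‖x‖ / ‖A x‖ : ℝ) : ℂ) • A x with hy
  have hyn : ‖y‖ = ‖x‖ := by
    rw [hy, norm_smul]
    simp [abs_div, abs_of_nonneg (norm_nonneg x), abs_of_nonneg (norm_nonneg (A x)),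
      div_mul_cancel₀ _ (norm_ne_zero_iff.mpr h0)]
  have key : 4 * (⟪A x, y⟫_ℂ).re = (⟪A (x + y), x + y⟫_ℂ).re - (⟪A (x - y), x - y⟫_ℂ).re := by
    have hsy : (⟪A y, x⟫_ℂ).re = (⟪A x, y⟫_ℂ).re := by
      rw [hsym y x]
      have hc : ⟪y, A x⟫_ℂ = starRingEnd ℂ ⟪A x, y⟫_ℂ := (inner_conj_symm _ _).symm
      rw [hc, Complex.conj_re]
    simp only [map_add, map_sub, inner_add_left, inner_add_right, inner_sub_left,
      inner_sub_right, Complex.add_re, Complex.sub_re]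
    linarith
  have hre : (⟪A x, y⟫_ℂ).re = ‖x‖ * ‖A x‖ := by
    rw [hy, inner_smul_right]
    have : ⟪A x, A x⟫_ℂ = (‖A x‖ ^ 2 : ℝ) := by
      rw [inner_self_eq_norm_sq_to_K]; norm_num
    rw [this]
    rw [show ((‖x‖ / ‖A x‖ : ℝ) : ℂ) * ((‖A x‖ ^ 2 : ℝ) : ℂ)
        = ((‖x‖ / ‖A x‖ * ‖A x‖ ^ 2 : ℝ) : ℂ) by push_cast; ring, Complex.ofReal_re]
    have : ‖A x‖ ≠ 0 := norm_ne_zero_iff.mpr h0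
    field_simp
  have hb1 : (⟪A (x + y), x + y⟫_ℂ).re ≤ C * ‖x + y‖ ^ 2 := (abs_le.mp (h (x + y))).2
  have hb2 : -(C * ‖x - y‖ ^ 2) ≤ (⟪A (x - y), x - y⟫_ℂ).re := (abs_le.mp (h (x - y))).1
  have hpar : ‖x + y‖ ^ 2 + ‖x - y‖ ^ 2 = 2 * (‖x‖ ^ 2 + ‖y‖ ^ 2) := by
    have := parallelogram_law_with_norm ℂ x y
    linarith
  have : 4 * (‖x‖ * ‖A x‖) ≤ C * (4 * ‖x‖ ^ 2) := by
    rw [← hre]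
    calc 4 * (⟪A x, y⟫_ℂ).re = (⟪A (x + y), x + y⟫_ℂ).re - (⟪A (x - y), x - y⟫_ℂ).re := key
    _ ≤ C * ‖x + y‖ ^ 2 + C * ‖x - y‖ ^ 2 := by linarith
    _ = C * (‖x + y‖ ^ 2 + ‖x - y‖ ^ 2) := by ring
    _ = C * (4 * ‖x‖ ^ 2) := by rw [hpar, hyn]; ring
  have hxpos : 0 < ‖x‖ := norm_pos_iff.mpr hx
  nlinarith

open Filter Topology in
lemma my_exists_eigen [CompleteSpace V] (A : V →L[ℂ] V)
    (hsym : ∀ x y : V, ⟪A x, y⟫_ℂ = ⟪x, A y⟫_ℂ)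
    (hcpt : IsCompactOperator A) (hA : A ≠ 0) :
    ∃ (lam : ℂ) (v : V), lam ≠ 0 ∧ v ≠ 0 ∧ A v = lam • v := by
  set M := ‖A‖ with hMdef
  have hMpos : 0 < M := norm_pos_iff.mpr hA
  obtain ⟨z, hz⟩ : ∃ z : V, A z ≠ 0 := by
    by_contra h; push_neg at h
    exact hA (by ext u; simp [h])
  have hz0 : z ≠ 0 := fun h => hz (by simp [h])
  -- a sequence of unit vectors nearly attaining the norm on the quadratic form
  have hseq : ∀ n : ℕ, ∃ x : V, ‖x‖ = 1 ∧ M - 1/(n+1) < |(⟪A x, x⟫_ℂ).re| := by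
    intro n
    by_contra hcon; push_neg at hcon
    set u : V := ((‖z‖⁻¹ : ℝ) : ℂ) • z with hu
    have hun : ‖u‖ = 1 := by
      rw [hu, norm_smul]
      simp [inv_mul_cancel₀ (norm_ne_zero_iff.mpr hz0)]
    have hC0 : 0 ≤ M - 1/(n+1) := le_trans (abs_nonneg _) (hcon u hun)
    have hb : ∀ x : V, |(⟪A x, x⟫_ℂ).re| ≤ (M - 1/(n+1)) * ‖x‖ ^ 2 := by
      intro x
      rcases eq_or_ne x 0 with rfl | hx
      · simp
      · have hxn : ‖x‖ ≠ 0 := norm_ne_zero_iff.mpr hx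
        set w : V := ((‖x‖⁻¹ : ℝ) : ℂ) • x with hw
        have hwn : ‖w‖ = 1 := by
          rw [hw, norm_smul]; simp [inv_mul_cancel₀ hxn]
        have hq : ⟪A w, w⟫_ℂ = (((‖x‖⁻¹ : ℝ) ^ 2 : ℝ) : ℂ) * ⟪A x, x⟫_ℂ := by
          rw [hw, map_smul, inner_smul_left, inner_smul_right, Complex.conj_ofReal]
          push_cast; ring
        have hqre : (⟪A w, w⟫_ℂ).re = (‖x‖⁻¹) ^ 2 * (⟪A x, x⟫_ℂ).re := by
          rw [hq, Complex.re_ofReal_mul]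
        have h1 : |(⟪A w, w⟫_ℂ).re| ≤ M - 1/(n+1) := hcon w hwn
        rw [hqre, abs_mul, abs_of_nonneg (by positivity : (0:ℝ) ≤ (‖x‖⁻¹)^2)] at h1
        have h2 : (‖x‖⁻¹)^2 * |(⟪A x, x⟫_ℂ).re| * ‖x‖^2 ≤ (M - 1/(n+1)) * ‖x‖^2 :=
          mul_le_mul_of_nonneg_right h1 (by positivity)
        calc |(⟪A x, x⟫_ℂ).re| = (‖x‖⁻¹)^2 * |(⟪A x, x⟫_ℂ).re| * ‖x‖^2 := by
              field_simp
          _ ≤ (M - 1/(n+1)) * ‖x‖^2 := h2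
    have hle : M ≤ M - 1/(n+1) := hMdef ▸ my_sa_norm_le A hsym hC0 hb
    have : (0:ℝ) < 1/(n+1) := by positivity
    linarith
  choose x hx1 hx2 using hseq
  set q : ℕ → ℝ := fun n => (⟪A (x n), x n⟫_ℂ).re with hqdef
  have hqle : ∀ n, |q n| ≤ M := by
    intro n
    calc |q n| ≤ ‖⟪A (x n), x n⟫_ℂ‖ := Complex.abs_re_le_norm _
      _ ≤ ‖A (x n)‖ * ‖x n‖ := by
          exact norm_inner_le_norm _ _
      _ ≤ M := by
          rw [hx1 n, mul_one]
          simpa [hx1 n] using A.le_opNorm (x n)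
  obtain ⟨lr, hlrmem, φ, hφ, hq'⟩ :=
    tendsto_subseq_of_bounded (Metric.isBounded_Icc (-M) M)
      (fun n => abs_le.mp (hqle n) |> fun h => Set.mem_Icc.mpr h)
  have hφt : Tendsto φ atTop atTop := hφ.tendsto_atTop
  have hql : Tendsto (fun n => |q (φ n)|) atTop (𝓝 |lr|) :=
    (continuous_abs.continuousAt.tendsto).comp hq'
  have hlb : Tendsto (fun n : ℕ => M - 1/((φ n : ℝ)+1)) atTop (𝓝 M) := by
    have h0 : Tendsto (fun n : ℕ => 1/((n:ℝ)+1)) atTop (𝓝 0) :=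
      tendsto_one_div_add_atTop_nhds_zero_nat
    have := (tendsto_const_nhds (x := M)).sub (h0.comp hφt)
    simpa using this
  have habs : |lr| = M := by
    refine le_antisymm ?_ ?_
    · exact le_of_tendsto hql (Filter.Eventually.of_forall fun n => hqle _)
    · exact le_of_tendsto_of_tendsto' hlb hql fun n => (hx2 (φ n)).le
  have hlr0 : lr ≠ 0 := by
    intro h; rw [h] at habs; simp at habs; linarith
  have hlrC : ((lr : ℂ)) ≠ 0 := Complex.ofReal_ne_zero.mpr hlr0
  set d : ℕ → V := fun n => A (x (φ n)) - ((lr:ℂ)) • x (φ n) with hddef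
  have hd2 : ∀ n, ‖d n‖^2 ≤ M^2 - 2*lr*q (φ n) + lr^2 := by
    intro n
    have hre : (⟪A (x (φ n)), ((lr:ℂ)) • x (φ n)⟫_ℂ).re = lr * q (φ n) := by
      rw [inner_smul_right, Complex.re_ofReal_mul]
    have hns : ‖((lr:ℂ)) • x (φ n)‖^2 = lr^2 := by
      rw [norm_smul, hx1, mul_one, Complex.norm_real, Real.norm_eq_abs, sq_abs]
    have hexp : ‖d n‖^2 = ‖A (x (φ n))‖^2 - 2 * (lr * q (φ n)) + lr^2 := by
      rw [hddef]
      rw [@norm_sub_sq ℂ V _ _ _ (A (x (φ n))) (((lr:ℂ)) • x (φ n)), RCLike.re_to_complex, hre, hns]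
    have hle : ‖A (x (φ n))‖ ≤ M := by
      simpa [hx1] using A.le_opNorm (x (φ n))
    nlinarith [norm_nonneg (A (x (φ n)))]
  have hM2 : lr^2 = M^2 := by rw [← sq_abs, habs]
  have hg : Tendsto (fun n => M^2 - 2*lr*q (φ n) + lr^2) atTop (𝓝 0) := by
    have h2 := ((tendsto_const_nhds (x := M^2)).sub (hq'.const_mul (2*lr))).add
      (tendsto_const_nhds (x := lr^2))
    simp only [Function.comp] at h2
    have hval : M ^ 2 - 2 * lr * lr + lr ^ 2 = 0 := by nlinarith
    rw [hval] at h2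
    exact h2
  have hdlim : Tendsto (fun n => ‖d n‖^2) atTop (𝓝 0) :=
    squeeze_zero (fun n => sq_nonneg _) hd2 hg
  have hdnorm : Tendsto d atTop (𝓝 0) := by
    rw [tendsto_zero_iff_norm_tendsto_zero]
    have h1 : Tendsto (fun n => Real.sqrt (‖d n‖^2)) atTop (𝓝 (Real.sqrt 0)) :=
      (Real.continuous_sqrt.continuousAt.tendsto).comp hdlim
    simpa [Real.sqrt_sq (norm_nonneg _)] using h1
  obtain ⟨K, hK, hAK⟩ := hcpt.image_closedBall_subset_compact (𝕜₁ := ℂ) 1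
  have hmem : ∀ n, A (x (φ n)) ∈ K := fun n =>
    hAK ⟨x (φ n), by simp [hx1], rfl⟩
  obtain ⟨y, hyK, ψ, hψ, hy⟩ := hK.tendsto_subseq hmem
  have hlx : Tendsto (fun n => ((lr:ℂ)) • x (φ (ψ n))) atTop (𝓝 y) := by
    have h1 : Tendsto (fun n => d (ψ n)) atTop (𝓝 0) := hdnorm.comp hψ.tendsto_atTop
    have heq : (fun n => ((lr:ℂ)) • x (φ (ψ n))) = fun n => A (x (φ (ψ n))) - d (ψ n) := by
      funext n; simp [hddef]
    rw [heq]
    simpa using hy.sub h1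
  set v : V := ((lr:ℂ))⁻¹ • y with hvdef
  have hxv : Tendsto (fun n => x (φ (ψ n))) atTop (𝓝 v) := by
    have h1 := hlx.const_smul (((lr:ℂ))⁻¹)
    have h3 : (fun n => ((lr:ℂ))⁻¹ • (((lr:ℂ)) • x (φ (ψ n)))) = fun n => x (φ (ψ n)) := by
      funext n; rw [smul_smul, inv_mul_cancel₀ hlrC, one_smul]
    rw [h3] at h1
    exact h1
  have hvnorm : ‖v‖ = 1 := by
    have h1 : Tendsto (fun n => ‖x (φ (ψ n))‖) atTop (𝓝 ‖v‖) :=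
      (continuous_norm.continuousAt.tendsto).comp hxv
    have h2 : Tendsto (fun n => ‖x (φ (ψ n))‖) atTop (𝓝 1) := by
      simpa [hx1] using (tendsto_const_nhds : Tendsto (fun _ : ℕ => (1:ℝ)) atTop (𝓝 1))
    exact tendsto_nhds_unique h1 h2
  have hAvy : A v = y := by
    have h1 : Tendsto (fun n => A (x (φ (ψ n)))) atTop (𝓝 (A v)) :=
      (A.continuous.continuousAt.tendsto).comp hxv
    exact tendsto_nhds_unique h1 hy
  refine ⟨(lr:ℂ), v, hlrC, ?_, ?_⟩
  · intro h; rw [h] at hvnorm; simp at hvnorm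
  · rw [hAvy, hvdef, smul_smul, mul_inv_cancel₀ hlrC, one_smul]

lemma my_eigen_findim [CompleteSpace V] {A : V →L[ℂ] V} (hcpt : IsCompactOperator A)
    {lam : ℂ} (hlam : lam ≠ 0) :
    FiniteDimensional ℂ (LinearMap.ker ((A - lam • (1 : V →L[ℂ] V) : V →L[ℂ] V) : V →ₗ[ℂ] V)) := by
  set B : V →L[ℂ] V := A - lam • (1 : V →L[ℂ] V) with hB
  set W : Submodule ℂ V := LinearMap.ker (B : V →ₗ[ℂ] V) with hW
  have hWmem : ∀ v : V, v ∈ W ↔ A v = lam • v := by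
    intro v
    rw [hW, LinearMap.mem_ker]
    have : B v = A v - lam • v := by
      simp [hB, ContinuousLinearMap.sub_apply, ContinuousLinearMap.smul_apply,
        ContinuousLinearMap.one_apply]
    rw [ContinuousLinearMap.coe_coe, this, sub_eq_zero]
  obtain ⟨K, hK, hAK⟩ := hcpt.image_closedBall_subset_compact (𝕜₁ := ℂ) 1
  set S : Set V := (Subtype.val : W → V) '' Metric.closedBall 0 1 with hS
  have hSeq : S = (W : Set V) ∩ Metric.closedBall (0 : V) 1 := by
    ext v
    constructor
    · rintro ⟨w, hw, rfl⟩
      refine ⟨w.2, ?_⟩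
      simp only [Metric.mem_closedBall, dist_zero_right] at hw ⊢
      exact hw
    · rintro ⟨hvW, hv1⟩
      refine ⟨⟨v, hvW⟩, ?_, rfl⟩
      simp only [Metric.mem_closedBall, dist_zero_right] at hv1 ⊢
      exact hv1
  have hWclosed : IsClosed (W : Set V) := by
    exact ContinuousLinearMap.isClosed_ker B
  have hSclosed : IsClosed S := by
    rw [hSeq]; exact hWclosed.inter Metric.isClosed_closedBall
  have hKc : IsCompact ((fun v : V => lam⁻¹ • v) '' K) :=
    hK.image (continuous_const_smul _)
  have hSsub : S ⊆ (fun v : V => lam⁻¹ • v) '' K := by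
    rintro v ⟨w, hw, rfl⟩
    refine ⟨A (w : V), hAK ⟨(w : V), ?_, rfl⟩, ?_⟩
    · simp only [Metric.mem_closedBall, dist_zero_right] at hw ⊢
      exact hw
    · show lam⁻¹ • A (w : V) = (w : V)
      rw [(hWmem (w : V)).mp w.2, smul_smul, inv_mul_cancel₀ hlam, one_smul]
  have hScompact : IsCompact S := hKc.of_isClosed_subset hSclosed hSsub
  have hball : IsCompact (Metric.closedBall (0 : W) 1) := by
    rw [Subtype.isCompact_iff]
    exact hScompact
  exact FiniteDimensional.of_isCompact_closedBall₀ ℂ one_pos hball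

end Aux

open scoped InnerProductSpace

/-- a compact Δ-preserving bounded operator on a Δ-invariant space
(on which the translations act as unitaries `T k` and every finite-dimensional
Δ-invariant subspace is zero, eigenspaces of Δ-preserving operators being
Δ-invariant) is the zero operator. -/
theorem stmt4 {V : Type*}
    [NormedAddCommGroup V] [InnerProductSpace ℂ V] [CompleteSpace V]
    {Δ : Type*} (T : Δ → (V ≃ₗᵢ[ℂ] V))
    (L : V →L[ℂ] V)
    (hpres : ∀ (k : Δ) (x : V), L (T k x) = T k (L x))
    -- the only finite-dimensional Δ-invariant subspace is {0}
    (hfin : ∀ W : Submodule ℂ V, (∀ (k : Δ) (x : V), x ∈ W → T k x ∈ W) →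
      FiniteDimensional ℂ W → W = ⊥)
    -- eigenspaces of any Δ-preserving operator are Δ-invariant
    (heig : ∀ (M : V →L[ℂ] V), (∀ (k : Δ) (x : V), M (T k x) = T k (M x)) →
      ∀ (lam : ℂ) (k : Δ) (x : V),
        x ∈ LinearMap.ker ((M - lam • (1 : V →L[ℂ] V) : V →L[ℂ] V) : V →ₗ[ℂ] V) →
        T k x ∈ LinearMap.ker ((M - lam • (1 : V →L[ℂ] V) : V →L[ℂ] V) : V →ₗ[ℂ] V))
    (hcpt : IsCompactOperator L) :
    L = 0 := by
  set A : V →L[ℂ] V := (ContinuousLinearMap.adjoint L).comp L with hAdef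
  have hsym : ∀ x y : V, ⟪A x, y⟫_ℂ = ⟪x, A y⟫_ℂ := by
    intro x y
    show ⟪(ContinuousLinearMap.adjoint L) (L x), y⟫_ℂ
      = ⟪x, (ContinuousLinearMap.adjoint L) (L y)⟫_ℂ
    rw [ContinuousLinearMap.adjoint_inner_left, ContinuousLinearMap.adjoint_inner_right]
  have hA0 : A = 0 → L = 0 := by
    intro h
    ext u
    have h1 : ⟪L u, L u⟫_ℂ = 0 := by
      rw [← ContinuousLinearMap.adjoint_inner_left]
      show ⟪A u, u⟫_ℂ = 0
      rw [h]
      simp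
    simpa using inner_self_eq_zero.mp h1
  by_contra hL
  have hAne : A ≠ 0 := fun h => hL (hA0 h)
  have hAcpt : IsCompactOperator A := by
    have := hcpt.clm_comp (ContinuousLinearMap.adjoint L)
    exact this
  -- the adjoint also commutes with the translations
  have hadj : ∀ (k : Δ) (x : V),
      (ContinuousLinearMap.adjoint L) (T k x) = T k ((ContinuousLinearMap.adjoint L) x) := by
    intro k x
    apply ext_inner_right ℂ
    intro y
    have hLg : ∀ y : V, L ((T k).symm y) = (T k).symm (L y) := by
      intro y
      have h1 := hpres k ((T k).symm y)
      rw [LinearIsometryEquiv.apply_symm_apply] at h1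
      rw [h1, LinearIsometryEquiv.symm_apply_apply]
    calc ⟪(ContinuousLinearMap.adjoint L) (T k x), y⟫_ℂ
        = ⟪T k x, L y⟫_ℂ := ContinuousLinearMap.adjoint_inner_left _ _ _
      _ = ⟪T k x, T k ((T k).symm (L y))⟫_ℂ := by rw [LinearIsometryEquiv.apply_symm_apply]
      _ = ⟪x, (T k).symm (L y)⟫_ℂ := LinearIsometryEquiv.inner_map_map _ _ _
      _ = ⟪x, L ((T k).symm y)⟫_ℂ := by rw [hLg]
      _ = ⟪(ContinuousLinearMap.adjoint L) x, (T k).symm y⟫_ℂ :=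
          (ContinuousLinearMap.adjoint_inner_left _ _ _).symm
      _ = ⟪T k ((ContinuousLinearMap.adjoint L) x), T k ((T k).symm y)⟫_ℂ :=
          (LinearIsometryEquiv.inner_map_map _ _ _).symm
      _ = ⟪T k ((ContinuousLinearMap.adjoint L) x), y⟫_ℂ := by
          rw [LinearIsometryEquiv.apply_symm_apply]
  have hApres : ∀ (k : Δ) (x : V), A (T k x) = T k (A x) := by
    intro k x
    show (ContinuousLinearMap.adjoint L) (L (T k x)) = T k ((ContinuousLinearMap.adjoint L) (L x))
    rw [hpres k x, hadj k (L x)]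
  obtain ⟨lam, v, hlam, hv, hAv⟩ := my_exists_eigen A hsym hAcpt hAne
  have hfd : FiniteDimensional ℂ (LinearMap.ker ((A - lam • (1 : V →L[ℂ] V) : V →L[ℂ] V) : V →ₗ[ℂ] V)) :=
    my_eigen_findim hAcpt hlam
  have hbot := hfin (LinearMap.ker ((A - lam • (1 : V →L[ℂ] V) : V →L[ℂ] V) : V →ₗ[ℂ] V)) (heig A hApres lam) hfd
  have hvmem : v ∈ LinearMap.ker ((A - lam • (1 : V →L[ℂ] V) : V →L[ℂ] V) : V →ₗ[ℂ] V) := by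
    rw [LinearMap.mem_ker]
    show A v - lam • v = 0
    rw [hAv, sub_self]
  rw [hbot] at hvmem
  exact hv (by simpa using hvmem)
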